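/- Convex chain argument: Let T : ℝ → ℝ be a terrain and u < g < p real numbers. Suppose T is affine on an interval [e₁, e₂] containing both u and g (with e₁ ≤ u < g ≤ e₂), and suppose P g sees P p with p ≥ e₂ and P p lies on or above the line supporting T on [e₁, e₂]. Then P u sees P p. (Moving a guard along its own edge away from a visible point preserves visibility of that point, provided the point is above the supporting line.) -/

import Mathlib

def Sees (T : ℝ → ℝ) (x y : ℝ) : Prop :=
  ∀ t ∈ Set.Icc (0:ℝ) 1, (1 - t) * T x + t * T y ≥ T ((1 - t) * x + t * y)

theorem move_guard_along_edge (T : ℝ → ℝ) (u g p e₁ e₂ m c : ℝ)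
    (hug : u < g) (hgp : g < p)
    (he₁u : e₁ ≤ u) (hge₂ : g ≤ e₂)
    (haff : ∀ x ∈ Set.Icc e₁ e₂, T x = m * x + c)
    (hpe₂ : p ≥ e₂)
    (hsee : Sees T g p)
    (habove : T p ≥ m * p + c) :
    Sees T u p := by
  intro t ht
  obtain ⟨ht0, ht1⟩ := ht
  set x := (1 - t) * u + t * p with hx
  have hTu : T u = m * u + c := haff u ⟨he₁u, le_trans hug.le hge₂⟩
  have hux : u ≤ x := by nlinarith
  by_cases hxe : x ≤ e₂
  · have hTx : T x = m * x + c := haff x ⟨le_trans he₁u hux, hxe⟩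
    rw [hTu, hTx, hx]
    nlinarith [mul_nonneg ht0 (sub_nonneg.2 habove)]
  · push_neg at hxe
    have hgx : g ≤ x := le_trans hge₂ hxe.le
    have hgp' : (0:ℝ) < p - g := by linarith
    set s := (x - g) / (p - g) with hs
    have hs0 : 0 ≤ s := div_nonneg (by linarith) (by linarith)
    have hxp : x ≤ p := by nlinarith
    have hs1 : s ≤ 1 := by rw [hs, div_le_one hgp']; linarith
    have hxeq : (1 - s) * g + s * p = x := by
      rw [hs]; linear_combination div_mul_cancel₀ (x - g) hgp'.ne'
    have h := hsee s ⟨hs0, hs1⟩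
    rw [hxeq] at h
    have hTg : T g = m * g + c := haff g ⟨by linarith, hge₂⟩
    rw [hTg] at h
    rw [hTu]
    have hsd : s * (p - g) = x - g := by
      rw [hs, div_mul_cancel₀ _ hgp'.ne']
    have hst : s ≤ t := by
      rw [hs, div_le_iff₀ hgp']; nlinarith
    have key : (1 - t) * (m * u + c) + t * (m * p + c)
        = (1 - s) * (m * g + c) + s * (m * p + c) := by
      linear_combination (-m) * hx - m * hsd
    nlinarith [key, h, mul_nonneg (sub_nonneg.2 hst) (sub_nonneg.2 habove)]
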